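/- Let m be the 5-dimensional Lie algebra with basis e₁,…,e₅ and nonzero brackets [e₄,e₅]=e₄, [e₄,e₂]=e₁, [e₄,e₃]=2e₂, [e₂,e₅]=e₂, [e₃,e₅]=2e₃ (and their antisymmetric counterparts). Suppose A is a Lie algebra automorphism of m whose matrix in this basis is upper triangular with diagonal entries a₁₁,…,a₅₅ all nonzero. Then a₅₅ = 1, the (3,4) entry a₃₄ = 0, the (2,4) entry satisfies a₂₄ = a₄₄·a₃₅, and the (1,4) entry satisfies a₁₄ = a₄₄·a₂₅ − a₄₅·a₂₄. Consequently the subspace spanned by {e₁, e₂, e₄} is invariant under every such automorphism. -/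
import Mathlib


/-- The bracket of the 5-dimensional Lie algebra m with basis e₁=G(1), e₂=F¹, e₃=F²,
e₄=Pᵗ, e₅=Dᵗ (indexed 0,…,4), and nonzero brackets [e₄,e₅]=e₄, [e₄,e₂]=e₁,
[e₄,e₃]=2e₂, [e₂,e₅]=e₂, [e₃,e₅]=2e₃ (in 1-based numbering). -/
def mBr (x y : Fin 5 → ℝ) : Fin 5 → ℝ :=
  ![x 3 * y 1 - x 1 * y 3,
    2 * (x 3 * y 2 - x 2 * y 3) + (x 4 * y 1 - x 1 * y 4),
    2 * (x 4 * y 2 - x 2 * y 4),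
    x 3 * y 4 - x 4 * y 3,
    0]

noncomputable def mE (i : Fin 5) : Fin 5 → ℝ := Pi.single i 1

/-- Constraints on an upper-triangular automorphism of m: a₅₅ = 1, a₃₄ = 0,
a₂₄ = a₄₄a₃₅, a₁₄ = a₄₄a₂₅ − a₄₅a₂₄ (1-based indices), and the subspace
⟨e₁, e₂, e₄⟩ is invariant. -/
theorem upper_triangular_automorphism_constraints
    (A : (Fin 5 → ℝ) →ₗ[ℝ] (Fin 5 → ℝ))
    (hbij : Function.Bijective A)
    (hbr : ∀ x y : Fin 5 → ℝ, A (mBr x y) = mBr (A x) (A y))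
    (a : Fin 5 → Fin 5 → ℝ)
    (hmat : ∀ j : Fin 5, A (mE j) = ∑ i : Fin 5, a i j • mE i)
    (htri : ∀ i j : Fin 5, (j : ℕ) < (i : ℕ) → a i j = 0)
    (hdiag : ∀ i : Fin 5, a i i ≠ 0) :
    a 4 4 = 1 ∧ a 2 3 = 0 ∧ a 1 3 = a 3 3 * a 2 4 ∧
    a 0 3 = a 3 3 * a 1 4 - a 3 4 * a 1 3 ∧
    Submodule.map A (Submodule.span ℝ {mE 0, mE 1, mE 3})
      = Submodule.span ℝ {mE 0, mE 1, mE 3} := by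
  have hA : ∀ j i : Fin 5, A (mE j) i = a i j := by
    intro j i
    rw [hmat]
    simp [mE, Finset.sum_apply, Pi.single_apply]
  have hbre : mBr (mE 3) (mE 4) = mE 3 := by
    funext i; fin_cases i <;> simp [mBr, mE, Pi.single_apply]
  have heq := hbr (mE 3) (mE 4)
  rw [hbre] at heq
  have c : ∀ i, a i 3 = mBr (A (mE 3)) (A (mE 4)) i :=
    fun i => (hA 3 i).symm.trans (congrFun heq i)
  have z43 : a 4 3 = 0 := htri 4 3 (by decide)
  have h3 := c 3
  have h2 := c 2
  have h1 := c 1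
  have h0 := c 0
  simp only [mBr, hA, Matrix.cons_val_zero, Matrix.cons_val_one, Matrix.head_cons,
    Matrix.cons_val_two, Matrix.tail_cons, Matrix.cons_val_three,
    Matrix.cons_val_four] at h3 h2 h1 h0
  rw [z43] at h3 h2 h1
  have ha44 : a 4 4 = 1 := by
    have h : a 3 3 * a 4 4 = a 3 3 * 1 := by linarith
    exact mul_left_cancel₀ (hdiag 3) h
  rw [ha44] at h2 h1
  have ha23 : a 2 3 = 0 := by linarith
  rw [ha23] at h1
  have ha13 : a 1 3 = a 3 3 * a 2 4 := by linarith
  have ha03 : a 0 3 = a 3 3 * a 1 4 - a 3 4 * a 1 3 := by linarith [h0]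
  refine ⟨ha44, ha23, ha13, ha03, ?_⟩
  -- zero entries below diagonal needed
  have hA' : ∀ j i : Fin 5, A (Pi.single j 1) i = a i j := hA
  have z10 : a 1 0 = 0 := htri 1 0 (by decide)
  have z20 : a 2 0 = 0 := htri 2 0 (by decide)
  have z30 : a 3 0 = 0 := htri 3 0 (by decide)
  have z40 : a 4 0 = 0 := htri 4 0 (by decide)
  have z21 : a 2 1 = 0 := htri 2 1 (by decide)
  have z31 : a 3 1 = 0 := htri 3 1 (by decide)
  have z41 : a 4 1 = 0 := htri 4 1 (by decide)
  have hAe0 : A (mE 0) = a 0 0 • mE 0 := by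
    funext i; fin_cases i <;>
      simp [hA', mE, Pi.single_apply, z10, z20, z30, z40]
  have hAe1 : A (mE 1) = a 0 1 • mE 0 + a 1 1 • mE 1 := by
    funext i; fin_cases i <;>
      simp [hA', mE, Pi.single_apply, z21, z31, z41]
  have hAe3 : A (mE 3) = a 0 3 • mE 0 + a 1 3 • mE 1 + a 3 3 • mE 3 := by
    funext i; fin_cases i <;>
      simp [hA', mE, Pi.single_apply, ha23, z43]
  set S : Submodule ℝ (Fin 5 → ℝ) := Submodule.span ℝ {mE 0, mE 1, mE 3} with hS
  have m0 : mE 0 ∈ S := Submodule.subset_span (by simp)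
  have m1 : mE 1 ∈ S := Submodule.subset_span (by simp)
  have m3 : mE 3 ∈ S := Submodule.subset_span (by simp)
  apply le_antisymm
  · rw [Submodule.map_le_iff_le_comap, hS, Submodule.span_le]
    rintro x (rfl | rfl | rfl) <;> simp only [SetLike.mem_coe, Submodule.mem_comap]
    · rw [hAe0]; exact S.smul_mem _ m0
    · rw [hAe1]; exact S.add_mem (S.smul_mem _ m0) (S.smul_mem _ m1)
    · rw [hAe3]
      exact S.add_mem (S.add_mem (S.smul_mem _ m0) (S.smul_mem _ m1)) (S.smul_mem _ m3)
  · have i0 : A (mE 0) ∈ Submodule.map A S := Submodule.mem_map_of_mem m0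
    have i1 : A (mE 1) ∈ Submodule.map A S := Submodule.mem_map_of_mem m1
    have i3 : A (mE 3) ∈ Submodule.map A S := Submodule.mem_map_of_mem m3
    set T := Submodule.map A S
    have t0 : mE 0 ∈ T := by
      have e : mE 0 = (a 0 0)⁻¹ • A (mE 0) := by
        rw [hAe0, smul_smul, inv_mul_cancel₀ (hdiag 0), one_smul]
      rw [e]; exact T.smul_mem _ i0
    have t1 : mE 1 ∈ T := by
      have e : mE 1 = (a 1 1)⁻¹ • (A (mE 1) - a 0 1 • mE 0) := by
        rw [hAe1]; rw [add_sub_cancel_left, smul_smul, inv_mul_cancel₀ (hdiag 1), one_smul]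
      rw [e]; exact T.smul_mem _ (T.sub_mem i1 (T.smul_mem _ t0))
    have t3 : mE 3 ∈ T := by
      have e : mE 3 = (a 3 3)⁻¹ • (A (mE 3) - a 0 3 • mE 0 - a 1 3 • mE 1) := by
        rw [hAe3]
        have : a 0 3 • mE 0 + a 1 3 • mE 1 + a 3 3 • mE 3 - a 0 3 • mE 0 - a 1 3 • mE 1
            = a 3 3 • mE 3 := by abel
        rw [this, smul_smul, inv_mul_cancel₀ (hdiag 3), one_smul]
      rw [e]
      exact T.smul_mem _ (T.sub_mem (T.sub_mem i3 (T.smul_mem _ t0)) (T.smul_mem _ t1))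
    rw [hS, Submodule.span_le]
    rintro x (rfl | rfl | rfl)
    exacts [t0, t1, t3]
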